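/- Let G be a connected simple graph on n ≥ 3 vertices with m edges. Then μ₁(G) + μ₂(G) > 4m/n + 1, where μ₁(G) and μ₂(G) are the two largest Laplacian eigenvalues of G. -/

import Mathlib

open Finset SimpleGraph

attribute [local instance] Classical.propDecidable

/-- The `i`-th largest value of the tuple `f` (values sorted in non-increasing order). -/
noncomputable def sortDesc {n : ℕ} (f : Fin n → ℝ) : Fin n → ℝ :=
  fun i => f (Tuple.sort f i.rev)

/-- The Laplacian eigenvalues of `G`, in non-increasing order:
`lapEig G 0 = μ₁ ≥ lapEig G 1 = μ₂ ≥ ⋯`. -/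
noncomputable def lapEig {n : ℕ} (G : SimpleGraph (Fin n)) : Fin n → ℝ :=
  sortDesc (SimpleGraph.posSemidef_lapMatrix ℝ G).isHermitian.eigenvalues

/-- The number of edges of `G`. -/
noncomputable def numEdges {n : ℕ} (G : SimpleGraph (Fin n)) : ℕ :=
  G.edgeFinset.card

/-- The singular values of the LI-matrix `LI(G) = L(G) - (2m/n)·Iₙ`, in non-increasing
order; they are the values `|μᵢ - 2m/n|` sorted non-increasingly. -/
noncomputable def LIsv {n : ℕ} (G : SimpleGraph (Fin n)) : Fin n → ℝ :=
  sortDesc (fun i => |lapEig G i - 2 * numEdges G / n|)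

/-- The Ky Fan `k`-norm of the LI-matrix of `G`: the sum of the `k` largest singular
values of `LI(G)`. -/
noncomputable def kyFanLI {n : ℕ} (G : SimpleGraph (Fin n)) (k : ℕ) : ℝ :=
  ∑ i ∈ Finset.univ.filter (fun i : Fin n => (i : ℕ) < k), LIsv G i

/-- `S_k(L(G))`, the sum of the `k` largest Laplacian eigenvalues of `G`. -/
noncomputable def lapSum {n : ℕ} (G : SimpleGraph (Fin n)) (k : ℕ) : ℝ :=
  ∑ i ∈ Finset.univ.filter (fun i : Fin n => (i : ℕ) < k), lapEig G i

section aux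
open Matrix

lemma trace_eq_sum_eig' {n : ℕ} {A : Matrix (Fin n) (Fin n) ℝ} (hA : A.IsHermitian) :
    A.trace = ∑ i, hA.eigenvalues i := by
  have h := hA.spectral_theorem
  rw [Unitary.conjStarAlgAut_apply] at h
  have hU : star (hA.eigenvectorUnitary : Matrix (Fin n) (Fin n) ℝ) *
      (hA.eigenvectorUnitary : Matrix (Fin n) (Fin n) ℝ) = 1 :=
    UnitaryGroup.star_mul_self _
  calc A.trace = ((hA.eigenvectorUnitary : Matrix (Fin n) (Fin n) ℝ) *
        diagonal (RCLike.ofReal ∘ hA.eigenvalues) *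
        star (hA.eigenvectorUnitary : Matrix (Fin n) (Fin n) ℝ)).trace := by rw [← h]
    _ = (diagonal (RCLike.ofReal ∘ hA.eigenvalues)).trace := by
        rw [trace_mul_cycle, hU, one_mul]
    _ = ∑ i, hA.eigenvalues i := by simp [trace_diagonal]

lemma trace_sq_eq_sum_eig_sq' {n : ℕ} {A : Matrix (Fin n) (Fin n) ℝ} (hA : A.IsHermitian) :
    (A * A).trace = ∑ i, hA.eigenvalues i ^ 2 := by
  have h := hA.spectral_theorem
  rw [Unitary.conjStarAlgAut_apply] at h
  set U : Matrix (Fin n) (Fin n) ℝ := (hA.eigenvectorUnitary : Matrix (Fin n) (Fin n) ℝ) with hUdef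
  set D : Matrix (Fin n) (Fin n) ℝ := diagonal (RCLike.ofReal ∘ hA.eigenvalues) with hDdef
  have hU : star U * U = 1 := UnitaryGroup.star_mul_self _
  have hAA : A * A = U * D * (star U * U) * D * star U := by
    conv_lhs => rw [h]
    noncomm_ring
  rw [hAA, hU, mul_one]
  calc (U * D * D * star U).trace = (U * (D * D) * star U).trace := by rw [mul_assoc U D D]
    _ = (star U * (U * (D * D))).trace := by rw [trace_mul_comm]
    _ = (D * D).trace := by rw [← mul_assoc, hU, one_mul]
    _ = ∑ i, hA.eigenvalues i ^ 2 := by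
        rw [hDdef, diagonal_mul_diagonal, trace_diagonal]
        simp [sq]

lemma lap_entry {n : ℕ} (G : SimpleGraph (Fin n)) (i j : Fin n) :
    G.lapMatrix ℝ i j = (if i = j then (G.degree i : ℝ) else 0) - (if G.Adj i j then 1 else 0) := by
  simp [lapMatrix, degMatrix, Matrix.sub_apply, Matrix.diagonal_apply, adjMatrix_apply]

lemma trace_lap {n : ℕ} (G : SimpleGraph (Fin n)) :
    (G.lapMatrix ℝ).trace = ∑ v, (G.degree v : ℝ) := by
  simp [lapMatrix, trace_sub, degMatrix, trace_diagonal, trace_adjMatrix]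

lemma trace_lap_sq {n : ℕ} (G : SimpleGraph (Fin n)) :
    (G.lapMatrix ℝ * G.lapMatrix ℝ).trace = ∑ v, ((G.degree v : ℝ)^2 + G.degree v) := by
  rw [Matrix.trace]
  refine Finset.sum_congr rfl fun i _ => ?_
  rw [Matrix.diag_apply, Matrix.mul_apply]
  have hsym : ∀ j : Fin n, G.lapMatrix ℝ j i = G.lapMatrix ℝ i j := by
    intro j
    rw [lap_entry, lap_entry]
    by_cases h : i = j
    · subst h; simp
    · simp [h, Ne.symm h, adj_comm]
  calc ∑ j, G.lapMatrix ℝ i j * G.lapMatrix ℝ j i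
      = ∑ j, ((if i = j then (G.degree i : ℝ)^2 else 0) + (if G.Adj i j then 1 else 0)) := by
        refine Finset.sum_congr rfl fun j _ => ?_
        rw [hsym j, lap_entry]
        by_cases h : i = j
        · subst h; simp [sq]
        · by_cases ha : G.Adj i j <;> simp [h, ha]
    _ = (G.degree i : ℝ)^2 + G.degree i := by
        rw [Finset.sum_add_distrib, Finset.sum_ite_eq, if_pos (Finset.mem_univ i),
          ← degree_eq_sum_if_adj]

lemma two_le_degree_of {n : ℕ} {G : SimpleGraph (Fin n)} {x a b : Fin n}
    (ha : G.Adj x a) (hb : G.Adj x b) (hab : a ≠ b) : 2 ≤ G.degree x := by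
  rw [← SimpleGraph.card_neighborFinset_eq_degree]
  exact Finset.one_lt_card.mpr ⟨a, by simpa using ha, b, by simpa using hb, hab⟩

lemma deg_sum_lt {n : ℕ} (hn : 3 ≤ n) (G : SimpleGraph (Fin n)) (hcon : G.Connected) :
    n < ∑ v, G.degree v := by
  have hdeg1 : ∀ v : Fin n, 1 ≤ G.degree v := by
    intro v
    obtain ⟨w, hvw⟩ : ∃ w : Fin n, v ≠ w := by
      by_cases h : v = ⟨0, by omega⟩
      · exact ⟨⟨1, by omega⟩, by rw [h]; simp [Fin.ext_iff]⟩
      · exact ⟨⟨0, by omega⟩, h⟩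
    obtain ⟨p⟩ := hcon.preconnected v w
    cases p with
    | nil => exact absurd rfl hvw
    | cons h q => exact (SimpleGraph.degree_pos_iff_exists_adj G v).mpr ⟨_, h⟩
  have hdeg2 : ∃ v : Fin n, 2 ≤ G.degree v := by
    obtain ⟨v, huv⟩ : ∃ v, G.Adj ⟨0, by omega⟩ v :=
      (SimpleGraph.degree_pos_iff_exists_adj G _).mp (hdeg1 _)
    obtain ⟨w, hwu, hwv⟩ : ∃ w : Fin n, w ≠ ⟨0, by omega⟩ ∧ w ≠ v := by
      by_cases h : v = ⟨1, by omega⟩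
      · exact ⟨⟨2, by omega⟩, by simp [Fin.ext_iff], by rw [h]; simp [Fin.ext_iff]⟩
      · exact ⟨⟨1, by omega⟩, by simp [Fin.ext_iff], fun hh => h hh.symm⟩
    obtain ⟨p⟩ := hcon.preconnected ⟨0, by omega⟩ w
    obtain ⟨q, hq⟩ := p.toPath
    cases q with
    | nil => exact absurd rfl hwu.symm
    | @cons _ x _ h₁ r =>
      cases r with
      | nil => exact ⟨_, two_le_degree_of huv h₁ (Ne.symm hwv)⟩
      | @cons _ y _ h₂ r₂ =>
        refine ⟨x, two_le_degree_of h₁.symm h₂ ?_⟩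
        have hns := (Walk.cons_isPath_iff _ _).mp hq
        intro huy
        exact hns.2 (by
          rw [huy, SimpleGraph.Walk.support_cons]
          exact List.mem_cons_of_mem _ r₂.start_mem_support)
  obtain ⟨v, hv⟩ := hdeg2
  calc n = ∑ _v : Fin n, 1 := by simp
    _ < ∑ v, G.degree v :=
      Finset.sum_lt_sum (fun i _ => hdeg1 i) ⟨v, Finset.mem_univ v, by omega⟩

end aux

set_option maxHeartbeats 1000000 in
/-- If `G` is a connected simple graph on `n ≥ 3` vertices with `m` edges,
then `μ₁(G) + μ₂(G) > 4m/n + 1`. -/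
theorem stmt_5 {n : ℕ} (hn : 3 ≤ n) (G : SimpleGraph (Fin n)) (hcon : G.Connected) :
    4 * (numEdges G : ℝ) / n + 1 < lapEig G ⟨0, by omega⟩ + lapEig G ⟨1, by omega⟩ := by
  have hA : (G.lapMatrix ℝ).IsHermitian := (SimpleGraph.posSemidef_lapMatrix ℝ G).isHermitian
  set ev : Fin n → ℝ := hA.eigenvalues with hev
  have hdef : ∀ i : Fin n, lapEig G i = ev (Tuple.sort ev i.rev) := fun i => rfl
  set μ : Fin n → ℝ := lapEig G with hμ
  -- antitone
  have hanti : ∀ i j : Fin n, i ≤ j → μ j ≤ μ i := by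
    intro i j hij
    have h1 : j.rev ≤ i.rev := Fin.rev_le_rev.mpr hij
    have := Tuple.monotone_sort ev h1
    simpa [hdef] using this
  have hle : ∀ (a : ℕ) (h : a < n) (i : Fin n), a ≤ i.val → (⟨a, h⟩ : Fin n) ≤ i :=
    fun a h i hi => Fin.le_def.mpr hi
  have hle' : ∀ (a : ℕ) (h : a < n) (i : Fin n), i.val ≤ a → i ≤ (⟨a, h⟩ : Fin n) :=
    fun a h i hi => Fin.le_def.mpr hi
  -- sum identities
  let e : Equiv.Perm (Fin n) := (Fin.revPerm).trans (Tuple.sort ev)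
  have he : ∀ i, μ i = ev (e i) := fun i => rfl
  have hsum : ∑ i, μ i = ∑ i, ev i := by
    simp only [he]; exact Equiv.sum_comp e ev
  have hsumsq : ∑ i, μ i ^ 2 = ∑ i, ev i ^ 2 := by
    simp only [he]; exact Equiv.sum_comp e (fun i => ev i ^ 2)
  -- nonneg
  have hnn : ∀ i, 0 ≤ μ i := fun i =>
    (SimpleGraph.posSemidef_lapMatrix ℝ G).eigenvalues_nonneg _
  -- zero eigenvalue
  have hone : (fun _ : Fin n => (1:ℝ)) ≠ 0 := by
    intro h
    have := congrFun h ⟨0, by omega⟩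
    norm_num at this
  have hdet : (G.lapMatrix ℝ).det = 0 :=
    Matrix.exists_mulVec_eq_zero_iff.mp ⟨_, hone, G.lapMatrix_mulVec_const_eq_zero⟩
  have hprod : ∏ i, ev i = 0 := by
    have h := hA.det_eq_prod_eigenvalues
    rw [hdet] at h
    exact_mod_cast h.symm
  obtain ⟨i₀, _, hi₀⟩ := Finset.prod_eq_zero_iff.mp hprod
  set ilast : Fin n := ⟨n - 1, by omega⟩ with hilast
  have hlast : μ ilast = 0 := by
    refine le_antisymm ?_ (hnn _)
    have h1 : μ ilast ≤ μ (e.symm i₀) := by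
      apply hanti
      rw [hilast]
      exact hle' (n-1) (by omega) _ (Nat.le_sub_one_of_lt (e.symm i₀).isLt)
    have h2 : μ (e.symm i₀) = 0 := by rw [he, Equiv.apply_symm_apply, hi₀]
    linarith
  -- notation
  set i0 : Fin n := ⟨0, by omega⟩ with hi0
  set i1 : Fin n := ⟨1, by omega⟩ with hi1
  set x : ℝ := μ i0 with hx
  set y : ℝ := μ i1 with hy
  set N : ℝ := (n : ℝ) with hN
  set s : ℝ := ∑ i, μ i with hs
  have hN3 : (3:ℝ) ≤ N := by rw [hN]; exact_mod_cast hn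
  -- s = 2m and s = sum of degrees
  have hdegsum : ∑ v, (G.degree v : ℝ) = s := by
    calc ∑ v, (G.degree v : ℝ) = (G.lapMatrix ℝ).trace := (trace_lap G).symm
      _ = ∑ i, ev i := trace_eq_sum_eig' hA
      _ = s := hsum.symm
  have hs2m : s = 2 * (numEdges G : ℝ) := by
    rw [← hdegsum]
    have h2 : ∑ v, G.degree v = 2 * numEdges G := by
      rw [numEdges]; exact G.sum_degrees_eq_twice_card_edges
    have := congrArg (fun k : ℕ => (k : ℝ)) h2
    push_cast at this
    linarith [this]
  -- s > N
  have hsN : N < s := by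
    rw [← hdegsum]
    have h := deg_sum_lt hn G hcon
    calc N = ((n : ℕ) : ℝ) := rfl
      _ < ((∑ v, G.degree v : ℕ) : ℝ) := by exact_mod_cast h
      _ = ∑ v, (G.degree v : ℝ) := by push_cast; rfl
  have hs0 : 0 < s := by linarith
  -- q ≤ x * s
  have hq_le : ∑ i, μ i ^ 2 ≤ x * s := by
    rw [hs, Finset.mul_sum]
    refine Finset.sum_le_sum fun i _ => ?_
    have h1 : μ i ≤ x := hanti i0 i (by rw [hi0]; exact hle 0 (by omega) i (Nat.zero_le _))
    calc μ i ^ 2 = μ i * μ i := sq (μ i)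
      _ ≤ x * μ i := mul_le_mul_of_nonneg_right h1 (hnn i)
  -- Cauchy-Schwarz for degrees
  have hCS : (∑ v, (G.degree v : ℝ))^2 ≤ N * ∑ v, (G.degree v : ℝ)^2 := by
    have := sq_sum_le_card_mul_sum_sq (s := (Finset.univ : Finset (Fin n)))
      (f := fun v => (G.degree v : ℝ))
    simpa using this
  -- q identity
  have hq_eq : ∑ i, μ i ^ 2 = ∑ v, ((G.degree v : ℝ)^2 + G.degree v) := by
    rw [hsumsq, ← trace_sq_eq_sum_eig_sq' hA, trace_lap_sq]
  -- h1 : s + N ≤ N * x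
  have h1 : s + N ≤ N * x := by
    have hNq : s^2 + N * s ≤ N * (x * s) := by
      have := mul_le_mul_of_nonneg_left hq_le (by linarith : (0:ℝ) ≤ N)
      calc s^2 + N * s ≤ N * ∑ i, μ i ^ 2 := by
            rw [hq_eq, Finset.sum_add_distrib, mul_add]
            have h2 : s^2 ≤ N * ∑ v, (G.degree v : ℝ)^2 := by rw [← hdegsum]; exact hCS
            have h3 : N * s = N * ∑ v, (G.degree v : ℝ) := by rw [hdegsum]
            linarith [h2, le_of_eq h3]
        _ ≤ N * (x * s) := this
    nlinarith [hs0, hNq]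
  -- h2 : s - x ≤ (N - 2) * y
  have h2 : s - x ≤ (N - 2) * y := by
    set S' : Finset (Fin n) := (Finset.univ.erase i0).erase ilast with hS'
    have hne : ilast ≠ i0 := by simp [hilast, hi0, Fin.ext_iff]; omega
    have hmem : ilast ∈ Finset.univ.erase i0 := Finset.mem_erase.mpr ⟨hne, Finset.mem_univ _⟩
    have hcard : S'.card = n - 2 := by
      rw [hS', Finset.card_erase_of_mem hmem, Finset.card_erase_of_mem (Finset.mem_univ _)]
      simp
      omega
    have hsplit : ∑ i ∈ S', μ i = s - x := by
      have e1 : μ ilast + ∑ i ∈ S', μ i = ∑ i ∈ Finset.univ.erase i0, μ i :=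
        Finset.add_sum_erase _ μ hmem
      have e2 : μ i0 + ∑ i ∈ Finset.univ.erase i0, μ i = ∑ i, μ i :=
        Finset.add_sum_erase _ μ (Finset.mem_univ _)
      rw [hlast] at e1
      rw [hs, hx]
      linarith
    have hbound : ∑ i ∈ S', μ i ≤ S'.card • y := by
      refine Finset.sum_le_card_nsmul S' μ y fun i hi => ?_
      have hi' : i ≠ i0 := (Finset.mem_erase.mp (Finset.mem_erase.mp hi).2).1
      have hiv : (i : ℕ) ≠ 0 := fun h => hi' (by rw [hi0]; exact Fin.ext h)
      exact hanti i1 i (by rw [hi1]; exact hle 1 (by omega) i (by omega))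
    rw [hsplit] at *
    calc s - x ≤ S'.card • y := hbound
      _ = ((n - 2 : ℕ) : ℝ) * y := by rw [hcard, nsmul_eq_mul]
      _ = (N - 2) * y := by
        congr 1
        push_cast [Nat.cast_sub (by omega : 2 ≤ n)]
        rfl
  -- final
  have hy0 : 0 ≤ y := hnn i1
  have hn0 : (0:ℝ) < N := by linarith
  have key : 2 * s + N < (x + y) * N := by
    nlinarith [mul_nonneg (by linarith : (0:ℝ) ≤ N - 3) (by linarith : (0:ℝ) ≤ N * x - s - N),
      mul_le_mul_of_nonneg_left h2 hn0.le, hsN, (by linarith : (0:ℝ) ≤ N - 2)]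
  have hgoal : 4 * (numEdges G : ℝ) / n + 1 = (2 * s + N) / N := by
    rw [hs2m, ← hN]
    field_simp
    ring
  rw [hgoal, div_lt_iff₀ hn0]
  exact key
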